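/- In a Baire base, if A is a non-Baire set with test region D, then for every Baire set B with B ∩ D abundant, there is a subregion C of D essentially contained in B, and consequently both B ∩ A and B ∩ (D − A) are abundant; that is, A is completely non-Baire in D. -/

import Mathlib

structure CatBase (X : Type*) where
  regions : Set (Set X)
  nonempty_X : Nonempty X
  cover : ∀ x : X, ∃ A ∈ regions, x ∈ A
  ax2 : ∀ A ∈ regions, ∀ D : Set (Set X), D ⊆ regions → D.Nonempty →
    D.Pairwise Disjoint → Cardinal.mk D < Cardinal.mk regions →
    ((∃ B ∈ regions, B ⊆ A ∩ ⋃₀ D) → ∃ C ∈ D, ∃ B ∈ regions, B ⊆ A ∩ C) ∧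
    (¬ (∃ B ∈ regions, B ⊆ A ∩ ⋃₀ D) →
      ∃ B ∈ regions, B ⊆ A ∧ ∀ C ∈ D, Disjoint B C)

namespace CatBase

variable {X : Type*}

/-- A set is singular if every region contains a subregion disjoint from it. -/
def Singular (cb : CatBase X) (S : Set X) : Prop :=
  ∀ A ∈ cb.regions, ∃ B ∈ cb.regions, B ⊆ A ∧ Disjoint B S

/-- A set is meager if it is a countable union of singular sets. -/
def Meager (cb : CatBase X) (S : Set X) : Prop :=
  ∃ f : ℕ → Set X, (∀ n, cb.Singular (f n)) ∧ S = ⋃ n, f n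

def Abundant (cb : CatBase X) (S : Set X) : Prop := ¬ cb.Meager S

/-- A set is Baire if every region has a subregion in which the set or its complement is meager. -/
def Baire (cb : CatBase X) (S : Set X) : Prop :=
  ∀ A ∈ cb.regions, ∃ B ∈ cb.regions, B ⊆ A ∧
    (cb.Meager (S ∩ B) ∨ cb.Meager (Sᶜ ∩ B))

end CatBase

namespace CatBase

lemma singular_mono (cb : CatBase X) {S T : Set X} (h : cb.Singular S) (hTS : T ⊆ S) :
    cb.Singular T := by
  intro A hA
  obtain ⟨B, hB, hBA, hd⟩ := h A hA
  exact ⟨B, hB, hBA, hd.mono_right hTS⟩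

lemma meager_mono (cb : CatBase X) {S T : Set X} (h : cb.Meager S) (hTS : T ⊆ S) :
    cb.Meager T := by
  obtain ⟨f, hf, rfl⟩ := h
  refine ⟨fun n => f n ∩ T, fun n => cb.singular_mono (hf n) Set.inter_subset_left, ?_⟩
  ext x
  simp only [Set.mem_iUnion, Set.mem_inter_iff]
  constructor
  · intro hx
    obtain ⟨n, hn⟩ := Set.mem_iUnion.mp (hTS hx)
    exact ⟨n, hn, hx⟩
  · rintro ⟨n, _, hx⟩; exact hx

lemma singular_empty (cb : CatBase X) : cb.Singular (∅ : Set X) :=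
  fun A hA => ⟨A, hA, subset_rfl, disjoint_bot_right⟩

lemma meager_empty (cb : CatBase X) : cb.Meager (∅ : Set X) :=
  ⟨fun _ => ∅, fun _ => cb.singular_empty, by simp⟩

lemma meager_union (cb : CatBase X) {S T : Set X} (hS : cb.Meager S) (hT : cb.Meager T) :
    cb.Meager (S ∪ T) := by
  obtain ⟨f, hf, rfl⟩ := hS
  obtain ⟨g, hg, rfl⟩ := hT
  refine ⟨fun n => if n % 2 = 0 then f (n / 2) else g (n / 2), fun n => ?_, ?_⟩
  · dsimp only; split <;> [exact hf _; exact hg _]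
  · ext x
    simp only [Set.mem_union, Set.mem_iUnion]
    constructor
    · rintro (⟨n, hn⟩ | ⟨n, hn⟩)
      · exact ⟨2 * n, by simpa using hn⟩
      · refine ⟨2 * n + 1, ?_⟩
        have h1 : (2 * n + 1) % 2 ≠ 0 := by omega
        have h2 : (2 * n + 1) / 2 = n := by omega
        simp [h1, h2, hn]
    · rintro ⟨n, hn⟩
      by_cases h : n % 2 = 0
      · left; exact ⟨n / 2, by simpa [h] using hn⟩
      · right; exact ⟨n / 2, by simpa [h] using hn⟩

lemma region_nonempty (cb : CatBase X) (hB : ∀ A ∈ cb.regions, cb.Abundant A)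
    {A : Set X} (hA : A ∈ cb.regions) : A.Nonempty := by
  rcases Set.eq_empty_or_nonempty A with h | h
  · exact absurd (h ▸ cb.meager_empty) (hB A hA)
  · exact h

end CatBase

namespace CatBase

variable {X : Type*}

open Classical in
noncomputable def pick (cb : CatBase X) (S : Set X)
    {r : ↥cb.regions → ↥cb.regions → Prop} (wf : WellFounded r) :
    ↥cb.regions → Option (Set X) :=
  wf.fix fun x rec =>
    if h : ∃ C, C ∈ cb.regions ∧ C ⊆ (x : Set X) ∧ cb.Meager (S ∩ C) ∧
        ∀ y : ↥cb.regions, ∀ hy : r y x, ∀ C', rec y hy = some C' → Disjoint C C'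
    then some h.choose else none

open Classical in
lemma pick_eq (cb : CatBase X) (S : Set X)
    {r : ↥cb.regions → ↥cb.regions → Prop} (wf : WellFounded r) (x : ↥cb.regions) :
    cb.pick S wf x =
      if h : ∃ C, C ∈ cb.regions ∧ C ⊆ (x : Set X) ∧ cb.Meager (S ∩ C) ∧
          ∀ y : ↥cb.regions, ∀ _ : r y x, ∀ C', cb.pick S wf y = some C' → Disjoint C C'
      then some h.choose else none :=
  wf.fix_eq _ x

lemma pick_spec (cb : CatBase X) (S : Set X)
    {r : ↥cb.regions → ↥cb.regions → Prop} (wf : WellFounded r) {x : ↥cb.regions}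
    {C : Set X} (h : cb.pick S wf x = some C) :
    C ∈ cb.regions ∧ C ⊆ (x : Set X) ∧ cb.Meager (S ∩ C) ∧
      ∀ y : ↥cb.regions, r y x → ∀ C', cb.pick S wf y = some C' → Disjoint C C' := by
  rw [pick_eq] at h
  split at h
  · rename_i hex
    obtain rfl : hex.choose = C := by simpa using h
    exact hex.choose_spec
  · simp at h


lemma banach (cb : CatBase X) (hB : ∀ A ∈ cb.regions, cb.Abundant A) (S : Set X)
    (hdense : ∀ A ∈ cb.regions, ∃ F ∈ cb.regions, F ⊆ A ∧ cb.Meager (S ∩ F)) :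
    cb.Meager S := by
  obtain ⟨r, wo, hord⟩ := Cardinal.ord_eq ↥cb.regions
  haveI : IsWellOrder ↥cb.regions r := wo
  have wf : WellFounded r := IsWellFounded.wf
  set f : ↥cb.regions → Option (Set X) := cb.pick S wf with hfdef
  set 𝒟 : Set (Set X) := {C | ∃ x, f x = some C} with h𝒟def
  have hDmem : ∀ C ∈ 𝒟, C ∈ cb.regions ∧ cb.Meager (S ∩ C) := by
    rintro C ⟨x, hx⟩
    exact ⟨(cb.pick_spec S wf hx).1, (cb.pick_spec S wf hx).2.2.1⟩
  have hpair : 𝒟.Pairwise Disjoint := by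
    rintro C ⟨x, hx⟩ C' ⟨x', hx'⟩ hne
    rcases trichotomous_of r x x' with h | h | h
    · exact ((cb.pick_spec S wf hx').2.2.2 x h C hx).symm
    · exact absurd (by rw [h] at hx; rw [hx] at hx'; exact Option.some.inj hx') hne
    · exact (cb.pick_spec S wf hx).2.2.2 x' h C' hx'
  have hkey : ∀ x : ↥cb.regions, ∃ B ∈ cb.regions, B ⊆ (x : Set X) ∧ ∃ C ∈ 𝒟, B ⊆ C := by
    intro x
    cases hfx : f x with
    | some C =>
      have spec := cb.pick_spec S wf hfx
      exact ⟨C, spec.1, spec.2.1, C, ⟨x, hfx⟩, subset_rfl⟩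
    | none =>
      set Dx : Set (Set X) := {C | ∃ y, r y x ∧ f y = some C} with hDxdef
      have hDx𝒟 : Dx ⊆ 𝒟 := by rintro C ⟨y, _, hy⟩; exact ⟨y, hy⟩
      have hDxsub : Dx ⊆ cb.regions := fun C hC => (hDmem C (hDx𝒟 hC)).1
      have hDxpair : Dx.Pairwise Disjoint := hpair.mono hDx𝒟
      have hcard : Cardinal.mk ↥Dx < Cardinal.mk ↥cb.regions := by
        have hle : Cardinal.mk ↥Dx ≤ Cardinal.mk {y // r y x} := by
          apply Cardinal.mk_le_of_injective
            (f := fun c : ↥Dx => (⟨c.2.choose, c.2.choose_spec.1⟩ : {y // r y x}))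
          intro c c' h
          have h1 := c.2.choose_spec.2
          have h2 := c'.2.choose_spec.2
          apply Subtype.ext
          have hcc : c.2.choose = c'.2.choose := congrArg Subtype.val h
          rw [hcc, h2] at h1
          exact (Option.some.inj h1).symm
        refine lt_of_le_of_lt hle ?_
        rw [← Ordinal.card_typein]
        exact Cardinal.card_typein_lt (r := r) x hord
      by_cases hU : ∃ B ∈ cb.regions, B ⊆ (x : Set X) ∩ ⋃₀ Dx
      · have hDxne : Dx.Nonempty := by
          rcases Set.eq_empty_or_nonempty Dx with hE | hne
          · exfalso
            obtain ⟨B, hBreg, hsub⟩ := hU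
            obtain ⟨z, hz⟩ := cb.region_nonempty hB hBreg
            have := hsub hz
            rw [hE] at this
            simp at this
          · exact hne
        obtain ⟨C, hC, B, hBreg, hBsub⟩ :=
          (cb.ax2 (x : Set X) x.2 Dx hDxsub hDxne hDxpair hcard).1 hU
        exact ⟨B, hBreg, hBsub.trans Set.inter_subset_left, C, hDx𝒟 hC,
          hBsub.trans Set.inter_subset_right⟩
      · have hBex : ∃ B ∈ cb.regions, B ⊆ (x : Set X) ∧ ∀ C ∈ Dx, Disjoint B C := by
          rcases Set.eq_empty_or_nonempty Dx with hE | hne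
          · exact ⟨x, x.2, subset_rfl, by simp [hE]⟩
          · exact (cb.ax2 (x : Set X) x.2 Dx hDxsub hne hDxpair hcard).2 hU
        obtain ⟨B, hBreg, hBx, hBd⟩ := hBex
        obtain ⟨F, hFreg, hFB, hFmea⟩ := hdense B hBreg
        exfalso
        have hex : ∃ C, C ∈ cb.regions ∧ C ⊆ (x : Set X) ∧ cb.Meager (S ∩ C) ∧
            ∀ y : ↥cb.regions, ∀ _ : r y x, ∀ C', f y = some C' → Disjoint C C' :=
          ⟨F, hFreg, hFB.trans hBx, hFmea,
            fun y hy C' hC' => (hBd C' ⟨y, hy, hC'⟩).mono_left hFB⟩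
        have heq := cb.pick_eq S wf x
        rw [← hfdef, hfx, dif_pos hex] at heq
        simp at heq
  -- choose decompositions of S ∩ C for C ∈ 𝒟
  have hchoice : ∀ C : ↥𝒟, ∃ g : ℕ → Set X,
      (∀ n, cb.Singular (g n)) ∧ S ∩ (C : Set X) = ⋃ n, g n := fun C => (hDmem C.1 C.2).2
  choose G hGsing hGeq using hchoice
  have hGsub : ∀ (C : ↥𝒟) n, G C n ⊆ (C : Set X) := by
    intro C n z hz
    have : z ∈ ⋃ m, G C m := Set.mem_iUnion.mpr ⟨n, hz⟩
    rw [← hGeq] at this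
    exact this.2
  have hGS : ∀ (C : ↥𝒟) n, G C n ⊆ S := by
    intro C n z hz
    have : z ∈ ⋃ m, G C m := Set.mem_iUnion.mpr ⟨n, hz⟩
    rw [← hGeq] at this
    exact this.1
  set T : ℕ → Set X := fun n => ⋃ C : ↥𝒟, G C n with hTdef
  have hTsing : ∀ n, cb.Singular (T n) := by
    intro n A hA
    obtain ⟨B, hBreg, hBA, C₀, hC₀, hBC₀⟩ := hkey ⟨A, hA⟩
    obtain ⟨B', hB'reg, hB'B, hB'd⟩ := hGsing ⟨C₀, hC₀⟩ n B hBreg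
    refine ⟨B', hB'reg, hB'B.trans hBA, Set.disjoint_left.mpr ?_⟩
    intro z hzB' hzT
    obtain ⟨C, hzC⟩ := Set.mem_iUnion.mp hzT
    by_cases hCC : (C : Set X) = C₀
    · have hCeq : C = (⟨C₀, hC₀⟩ : ↥𝒟) := Subtype.ext hCC
      rw [hCeq] at hzC
      exact Set.disjoint_left.mp hB'd hzB' hzC
    · have hz0 : z ∈ C₀ := hBC₀ (hB'B hzB')
      exact Set.disjoint_left.mp (hpair C.2 hC₀ hCC) (hGsub C n hzC) hz0
  have hRsing : cb.Singular (S \ ⋃₀ 𝒟) := by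
    intro A hA
    obtain ⟨B, hBreg, hBA, C₀, hC₀, hBC₀⟩ := hkey ⟨A, hA⟩
    exact ⟨B, hBreg, hBA,
      Set.disjoint_left.mpr fun z hz hzR => hzR.2 ⟨C₀, hC₀, hBC₀ hz⟩⟩
  set g : ℕ → Set X := fun n => Nat.rec (S \ ⋃₀ 𝒟) (fun m _ => T m) n with hgdef
  have hgsing : ∀ n, cb.Singular (g n) := by
    rintro (_ | n)
    · exact hRsing
    · exact hTsing n
  have hcover : S ⊆ ⋃ n, g n := by
    intro z hz
    by_cases hz𝒟 : z ∈ ⋃₀ 𝒟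
    · obtain ⟨C, hC, hzC⟩ := hz𝒟
      have : z ∈ ⋃ m, G ⟨C, hC⟩ m := by
        rw [← hGeq]
        exact ⟨hz, hzC⟩
      obtain ⟨m, hm⟩ := Set.mem_iUnion.mp this
      exact Set.mem_iUnion.mpr ⟨m + 1, Set.mem_iUnion.mpr ⟨⟨C, hC⟩, hm⟩⟩
    · exact Set.mem_iUnion.mpr ⟨0, hz, hz𝒟⟩
  exact cb.meager_mono ⟨g, hgsing, rfl⟩ hcover

end CatBase


theorem stmt13 {X : Type*} (cb : CatBase X)
    (hBaire : ∀ A ∈ cb.regions, cb.Abundant A) {A D : Set X}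
    (hD : D ∈ cb.regions)
    (htest : ∀ E ∈ cb.regions, E ⊆ D → cb.Abundant (A ∩ E) ∧ cb.Abundant (Aᶜ ∩ E)) :
    ∀ B : Set X, cb.Baire B → cb.Abundant (B ∩ D) →
      (∃ C ∈ cb.regions, C ⊆ D ∧ cb.Meager (C \ B)) ∧
      cb.Abundant (B ∩ A) ∧ cb.Abundant (B ∩ (D \ A)) := by
  intro B hBai hBD
  have hex : ∃ C ∈ cb.regions, C ⊆ D ∧ cb.Meager (C \ B) := by
    by_contra hno
    push_neg at hno
    apply hBD
    apply cb.banach hBaire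
    intro E hE
    by_cases hED : ∃ G ∈ cb.regions, G ⊆ E ∩ D
    · obtain ⟨G, hG, hGED⟩ := hED
      have hGD : G ⊆ D := hGED.trans Set.inter_subset_right
      obtain ⟨F, hF, hFG, hc⟩ := hBai G hG
      rcases hc with hc | hc
      · refine ⟨F, hF, hFG.trans (hGED.trans Set.inter_subset_left), ?_⟩
        exact cb.meager_mono hc fun z hz => ⟨hz.1.1, hz.2⟩
      · exfalso
        apply hno F hF (hFG.trans hGD)
        apply cb.meager_mono hc
        intro z hz
        exact ⟨hz.2, hz.1⟩
    · have hED' : E ≠ D := by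
        rintro rfl
        exact hED ⟨E, hE, fun z hz => ⟨hz, hz⟩⟩
      have hnt : Nontrivial ↥cb.regions := ⟨⟨E, hE⟩, ⟨D, hD⟩, by simpa using hED'⟩
      have hcard : Cardinal.mk ↥({D} : Set (Set X)) < Cardinal.mk ↥cb.regions := by
        rw [Cardinal.mk_singleton]
        exact Cardinal.one_lt_iff_nontrivial.mpr hnt
      have hhyp : ¬ ∃ B' ∈ cb.regions, B' ⊆ E ∩ ⋃₀ ({D} : Set (Set X)) := by
        rw [Set.sUnion_singleton]; exact hED
      obtain ⟨F, hF, hFE, hdisj⟩ :=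
        (cb.ax2 E hE {D} (by simpa using hD) ⟨D, rfl⟩
          (Set.pairwise_singleton _ _) hcard).2 hhyp
      have hFD : Disjoint F D := hdisj D rfl
      refine ⟨F, hF, hFE, ?_⟩
      apply cb.meager_mono cb.meager_empty
      intro z hz
      exact Set.disjoint_left.mp hFD hz.2 hz.1.2
  obtain ⟨C, hC, hCD, hCB⟩ := hex
  have ht := htest C hC hCD
  refine ⟨⟨C, hC, hCD, hCB⟩, ?_, ?_⟩
  · intro hM
    apply ht.1
    apply cb.meager_mono (cb.meager_union hM hCB)
    intro z hz
    by_cases hzB : z ∈ B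
    · exact Or.inl ⟨hzB, hz.1⟩
    · exact Or.inr ⟨hz.2, hzB⟩
  · intro hM
    apply ht.2
    apply cb.meager_mono (cb.meager_union hM hCB)
    intro z hz
    by_cases hzB : z ∈ B
    · exact Or.inl ⟨hzB, hCD hz.2, hz.1⟩
    · exact Or.inr ⟨hz.2, hzB⟩
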